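/- Let A be a finite-dimensional perm algebra, R ∈ A ⊗ A a symmetric solution of the S-equation, and define Δ : A → A ⊗ A by Δ(a) = (κl(a) ⊗ id + id ⊗ κl(a) − id ⊗ κr(a))(R), where κl(a)(x) = ax, κr(a)(x) = xa. Then the induced perm algebra structure on A* (via Δ*) is given by b1 b2 = κr*(R#(b2))(b1) + κr*(R#(b1))(b2) − κl*(R#(b1))(b2), and moreover R# : A* → A is a morphism of perm algebras; if R is nondegenerate, R# is an isomorphism of perm algebras. -/
import Mathlib


open TensorProduct

/-- For `R = Σᵢ aᵢ ⊗ āᵢ ∈ A ⊗ A`, the element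
`P(R) = R₁₃R₁₂ − R₁₃R₂₃ + R₂₃R₁₂ − R₁₂R₂₃ ∈ A ⊗ A ⊗ A`; the S-equation is `P(R) = 0`. -/
noncomputable def sTensor {k A : Type*} [Field k] [AddCommGroup A] [Module k A]
    (mul : A →ₗ[k] A →ₗ[k] A) (R : A ⊗[k] A) : A ⊗[k] (A ⊗[k] A) :=
  let M : A ⊗[k] A →ₗ[k] A := TensorProduct.lift mul
  let X : (A ⊗[k] A) ⊗[k] (A ⊗[k] A) := R ⊗ₜ[k] R
  let Y := (TensorProduct.tensorTensorTensorComm k A A A A) X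
  (TensorProduct.map M LinearMap.id)
      ((TensorProduct.map LinearMap.id (TensorProduct.comm k A A).toLinearMap) Y)
  - (TensorProduct.assoc k A A A) ((TensorProduct.map LinearMap.id M) Y)
  + (TensorProduct.map LinearMap.id (TensorProduct.map M LinearMap.id))
      ((TensorProduct.map LinearMap.id (TensorProduct.assoc k A A A).symm.toLinearMap)
        ((TensorProduct.assoc k A A (A ⊗[k] A))
          ((TensorProduct.tensorTensorTensorComm k A A A A)
            ((TensorProduct.comm k (A ⊗[k] A) (A ⊗[k] A)) X))))
  - (TensorProduct.map LinearMap.id (TensorProduct.map M LinearMap.id))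
      ((TensorProduct.map LinearMap.id (TensorProduct.assoc k A A A).symm.toLinearMap)
        ((TensorProduct.assoc k A A (A ⊗[k] A)) X))

/-- The linear map `R♯ : A* → A` attached to `R ∈ A ⊗ A`, determined by
`⟨R♯(u₁), u₂⟩ = ⟨R, u₁ ⊗ u₂⟩`. -/
noncomputable def rSharp {k A : Type*} [Field k] [AddCommGroup A] [Module k A]
    (R : A ⊗[k] A) : Module.Dual k A → A :=
  fun u => (TensorProduct.lid k A) ((TensorProduct.map u LinearMap.id) R)

/-- The coboundary comultiplication
`Δ(a) = (κl(a) ⊗ id + id ⊗ κl(a) − id ⊗ κr(a))(R)`. -/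
noncomputable def coboundaryDelta {k A : Type*} [Field k] [AddCommGroup A] [Module k A]
    (mul : A →ₗ[k] A →ₗ[k] A) (R : A ⊗[k] A) (a : A) : A ⊗[k] A :=
  (TensorProduct.map (mul a) LinearMap.id) R + (TensorProduct.map LinearMap.id (mul a)) R -
    (TensorProduct.map LinearMap.id (mul.flip a)) R

section Aux

variable {k A : Type*} [Field k] [AddCommGroup A] [Module k A]

@[simp] lemma rSharp_tmul (x y : A) (u : Module.Dual k A) :
    rSharp (x ⊗ₜ[k] y) u = u x • y := by simp [rSharp]

@[simp] lemma rSharp_zero (u : Module.Dual k A) : rSharp (0 : A ⊗[k] A) u = 0 := by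
  simp [rSharp]

@[simp] lemma rSharp_add (S T : A ⊗[k] A) (u : Module.Dual k A) :
    rSharp (S + T) u = rSharp S u + rSharp T u := by simp [rSharp]

@[simp] lemma rSharp_add_u (S : A ⊗[k] A) (u v : Module.Dual k A) :
    rSharp S (u + v) = rSharp S u + rSharp S v := by
  simp [rSharp, TensorProduct.map_add_left]

@[simp] lemma rSharp_smul_u (S : A ⊗[k] A) (c : k) (u : Module.Dual k A) :
    rSharp S (c • u) = c • rSharp S u := by
  simp [rSharp, TensorProduct.map_smul_left]

@[simp] lemma rSharp_zero_u (S : A ⊗[k] A) : rSharp S (0 : Module.Dual k A) = 0 := by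
  induction S using TensorProduct.induction_on <;> simp_all

@[simp] lemma rSharp_sub_u (S : A ⊗[k] A) (u v : Module.Dual k A) :
    rSharp S (u - v) = rSharp S u - rSharp S v := by
  induction S using TensorProduct.induction_on with
  | zero => simp
  | tmul x y => simp [sub_smul]
  | add a b ha hb => simp [ha, hb]; abel

/-- `rSharp R` as a linear map. -/
noncomputable def rSharpL (R : A ⊗[k] A) : Module.Dual k A →ₗ[k] A where
  toFun := rSharp R
  map_add' u v := rSharp_add_u R u v
  map_smul' c u := rSharp_smul_u R c u

@[simp] lemma dualMap_add' (f g : A →ₗ[k] A) (b : Module.Dual k A) :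
    (f + g).dualMap b = f.dualMap b + g.dualMap b := by ext x; simp

@[simp] lemma dualMap_zero' (b : Module.Dual k A) :
    ((0 : A →ₗ[k] A)).dualMap b = 0 := by ext x; simp

end Aux

section Key

variable {k A : Type*} [Field k] [AddCommGroup A] [Module k A]
variable (mul : A →ₗ[k] A →ₗ[k] A) (b1 b2 : Module.Dual k A)

/-- The sTensor expression with the two copies of `R` replaced by `S` and `T`. -/
noncomputable def sT2 (S T : A ⊗[k] A) : A ⊗[k] (A ⊗[k] A) :=
  let M : A ⊗[k] A →ₗ[k] A := TensorProduct.lift mul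
  let X : (A ⊗[k] A) ⊗[k] (A ⊗[k] A) := S ⊗ₜ[k] T
  let Y := (TensorProduct.tensorTensorTensorComm k A A A A) X
  (TensorProduct.map M LinearMap.id)
      ((TensorProduct.map LinearMap.id (TensorProduct.comm k A A).toLinearMap) Y)
  - (TensorProduct.assoc k A A A) ((TensorProduct.map LinearMap.id M) Y)
  + (TensorProduct.map LinearMap.id (TensorProduct.map M LinearMap.id))
      ((TensorProduct.map LinearMap.id (TensorProduct.assoc k A A A).symm.toLinearMap)
        ((TensorProduct.assoc k A A (A ⊗[k] A))
          ((TensorProduct.tensorTensorTensorComm k A A A A)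
            ((TensorProduct.comm k (A ⊗[k] A) (A ⊗[k] A)) X))))
  - (TensorProduct.map LinearMap.id (TensorProduct.map M LinearMap.id))
      ((TensorProduct.map LinearMap.id (TensorProduct.assoc k A A A).symm.toLinearMap)
        ((TensorProduct.assoc k A A (A ⊗[k] A)) X))

lemma sT2_diag (R : A ⊗[k] A) : sT2 mul R R = sTensor mul R := rfl

/-- The contraction `p ⊗ q ⊗ s ↦ b1(p) b2(q) • s`. -/
noncomputable def ctr : A ⊗[k] (A ⊗[k] A) →ₗ[k] A :=
  (TensorProduct.lid k A).toLinearMap ∘ₗ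
    TensorProduct.map b1 ((TensorProduct.lid k A).toLinearMap ∘ₗ
      TensorProduct.map b2 LinearMap.id)

@[simp] lemma ctr_tmul (p q s : A) :
    ctr b1 b2 (p ⊗ₜ[k] (q ⊗ₜ[k] s)) = b1 p • b2 q • s := by
  simp [ctr, smul_smul, mul_comm]

lemma sT2_add_left (S S' T : A ⊗[k] A) :
    sT2 mul (S + S') T = sT2 mul S T + sT2 mul S' T := by
  simp only [sT2, add_tmul, tmul_add, map_add]; abel

lemma sT2_add_right (S T T' : A ⊗[k] A) :
    sT2 mul S (T + T') = sT2 mul S T + sT2 mul S T' := by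
  simp only [sT2, add_tmul, tmul_add, map_add]; abel

lemma master (S T : A ⊗[k] A) :
    ctr b1 b2 (sT2 mul S T) =
      rSharp S ((mul.flip (rSharp ((TensorProduct.comm k A A) T) b2)).dualMap b1)
      - mul (rSharp S b1) (rSharp T b2)
      + rSharp S ((mul.flip (rSharp T b1)).dualMap b2)
      - rSharp T ((mul (rSharp S b1)).dualMap b2) := by
  induction S using TensorProduct.induction_on with
  | zero => simp [sT2]
  | add S S' hS hS' =>
      rw [sT2_add_left, map_add, hS, hS']
      simp only [rSharp_add, map_add, dualMap_add', rSharp_add_u, LinearMap.add_apply]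
      abel
  | tmul x y =>
      induction T using TensorProduct.induction_on with
      | zero => simp [sT2]
      | add T T' hT hT' =>
          rw [sT2_add_right, map_add, hT, hT']
          simp only [rSharp_add, map_add, dualMap_add', rSharp_add_u, LinearMap.add_apply]
          abel
      | tmul z w => simp [sT2, smul_smul, mul_comm]

end Key

section KeyI

variable {k A : Type*} [Field k] [AddCommGroup A] [Module k A]
variable (mul : A →ₗ[k] A →ₗ[k] A) (b1 b2 : Module.Dual k A)

lemma keyI (a : A) (S : A ⊗[k] A) :
    (TensorProduct.lid k k) ((TensorProduct.map b1 b2)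
      ((TensorProduct.map (mul a) LinearMap.id) S +
        (TensorProduct.map LinearMap.id (mul a)) S -
        (TensorProduct.map LinearMap.id (mul.flip a)) S)) =
      b1 (mul a (rSharp ((TensorProduct.comm k A A) S) b2)) +
        b2 (mul a (rSharp S b1)) - b2 (mul (rSharp S b1) a) := by
  induction S using TensorProduct.induction_on with
  | zero => simp
  | add S S' h h' =>
      simp only [map_add, map_sub, rSharp_add, LinearMap.add_apply] at h h' ⊢
      linear_combination h + h' 
  | tmul x y => simp [mul_comm, smul_smul, mul_left_comm]

end KeyI

/-- Let `R ∈ A ⊗ A` be a symmetric solution of the S-equation in a finite-dimensional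
perm algebra `A`, and `Δ(a) = (κl(a) ⊗ id + id ⊗ κl(a) − id ⊗ κr(a))(R)`.  Then the
induced perm algebra structure on `A*` (via `Δ*`) is
`b₁b₂ = κr*(R♯(b₂))(b₁) + κr*(R♯(b₁))(b₂) − κl*(R♯(b₁))(b₂)`, the map `R♯ : A* → A` is a
morphism of perm algebras, and if `R` is nondegenerate then `R♯` is an isomorphism of
perm algebras. -/
theorem coboundary_bialgebra_structure {k A : Type*} [Field k] [AddCommGroup A] [Module k A]
    [FiniteDimensional k A]
    (mul : A →ₗ[k] A →ₗ[k] A)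
    (hp1 : ∀ x y z, mul (mul x y) z = mul x (mul y z))
    (hp2 : ∀ x y z, mul x (mul y z) = mul x (mul z y))
    (R : A ⊗[k] A)
    (hsym : (TensorProduct.comm k A A) R = R)
    (hS : sTensor mul R = 0) :
    -- (i) the perm structure on A* induced by Δ is given by the stated formula
    (∀ (b1 b2 : Module.Dual k A) (a : A),
      (TensorProduct.lid k k) ((TensorProduct.map b1 b2) (coboundaryDelta mul R a)) =
        ((mul.flip (rSharp R b2)).dualMap b1 + (mul.flip (rSharp R b1)).dualMap b2 -
          (mul (rSharp R b1)).dualMap b2) a) ∧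
    -- (ii) R♯ is a morphism of perm algebras
    (∀ b1 b2 : Module.Dual k A,
      rSharp R ((mul.flip (rSharp R b2)).dualMap b1 + (mul.flip (rSharp R b1)).dualMap b2 -
          (mul (rSharp R b1)).dualMap b2) =
        mul (rSharp R b1) (rSharp R b2)) ∧
    -- and if R is nondegenerate, R♯ is an isomorphism of perm algebras
    ((∀ u : Module.Dual k A, rSharp R u = 0 → u = 0) → Function.Bijective (rSharp R)) := by
  refine ⟨?_, ?_, ?_⟩
  · intro b1 b2 a
    have h := keyI mul b1 b2 a R
    rw [hsym] at h
    rw [coboundaryDelta, h]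
    simp [LinearMap.dualMap_apply, LinearMap.flip_apply]
  · intro b1 b2
    have h := master mul b1 b2 R R
    rw [sT2_diag, hS, map_zero, hsym] at h
    rw [rSharp_sub_u, rSharp_add_u]
    set a1 := rSharp R ((mul.flip (rSharp R b2)).dualMap b1) with ha1
    set a2 := mul (rSharp R b1) (rSharp R b2) with ha2
    set a3 := rSharp R ((mul.flip (rSharp R b1)).dualMap b2) with ha3
    set a4 := rSharp R ((mul (rSharp R b1)).dualMap b2) with ha4
    have h5 : a1 + a3 - a4 - a2 = a1 - a2 + a3 - a4 := by abel
    exact sub_eq_zero.mp (h5.trans h.symm)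
  · intro hinj
    have hinj' : Function.Injective (rSharpL (k := k) R) := by
      rw [← LinearMap.ker_eq_bot]
      exact LinearMap.ker_eq_bot'.mpr fun u hu => hinj u hu
    exact ⟨hinj', (LinearMap.injective_iff_surjective_of_finrank_eq_finrank
      Subspace.dual_finrank_eq).mp hinj'⟩
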